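/- Let $E$ be a Banach space, $2 \le q < \infty$, and suppose the Schatten class $S_1(\ell_2 \otimes \ell_2)$ (equivalently $S_1$ of a separable Hilbert space) has cotype 2 with constant $c$. Then for any finite family $x_1, \dots, x_n$ in $S_1(S_1)$, $\Big( \sum_{k=1}^n \| x_k \|_{S_1(S_1)}^2 \Big)^{1/2} \le c \, \Big\| \Big( \sum_{k=1}^n x_k^* x_k \Big)^{1/2} \Big\|_{S_1(S_1)}$, where $x_k^* x_k$ is computed viewing $x_k$ as operators. -/

import Mathlib

open scoped ENNReal BigOperators ComplexOrder
open Matrix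

noncomputable def ctmEig {m n : Type*} [Fintype m] [Fintype n] [DecidableEq n]
    (a : Matrix m n ℂ) : n → ℝ :=
  (Matrix.posSemidef_conjTranspose_mul_self a).isHermitian.eigenvalues

/-- Schatten `p`-norm of a (rectangular) complex matrix; `p = ∞` is the operator norm. -/
noncomputable def schNorm {m n : Type*} [Fintype m] [Fintype n] [DecidableEq n]
    (p : ℝ≥0∞) (a : Matrix m n ℂ) : ℝ :=
  if p = ∞ then ⨆ j, Real.sqrt (ctmEig a j)
  else (∑ j, ctmEig a j ^ (p.toReal / 2)) ^ (1 / p.toReal)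

section SqrtPort
open scoped MatrixOrder

noncomputable def Matrix.PosSemidef.sqrt {n : Type*} [Fintype n] [DecidableEq n]
    {A : Matrix n n ℂ} (_hA : A.PosSemidef) : Matrix n n ℂ := CFC.sqrt A

lemma Matrix.PosSemidef.posSemidef_sqrt {n : Type*} [Fintype n] [DecidableEq n]
    {A : Matrix n n ℂ} (hA : A.PosSemidef) : hA.sqrt.PosSemidef :=
  (CFC.sqrt_nonneg A).posSemidef

lemma Matrix.PosSemidef.sq_sqrt {n : Type*} [Fintype n] [DecidableEq n]
    {A : Matrix n n ℂ} (hA : A.PosSemidef) : hA.sqrt ^ 2 = A :=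
  CFC.sq_sqrt A hA.nonneg

lemma Matrix.PosSemidef.eq_sqrt_of_sq_eq {n : Type*} [Fintype n] [DecidableEq n]
    {A B : Matrix n n ℂ} (hA : A.PosSemidef) (hB : B.PosSemidef) (h : A ^ 2 = B) :
    A = hB.sqrt :=
  ((CFC.sqrt_eq_iff B A hB.nonneg hA.nonneg).mpr (by rw [← h, pow_two])).symm

lemma Matrix.PosSemidef.trace_sqrt {n : Type*} [Fintype n] [DecidableEq n]
    {A : Matrix n n ℂ} (hA : A.PosSemidef) :
    hA.sqrt.trace = ∑ i, (Real.sqrt (hA.isHermitian.eigenvalues i) : ℂ) := by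
  rw [Matrix.PosSemidef.sqrt, CFC.sqrt_eq_cfc, cfc_nnreal_eq_real _ A, hA.1.cfc_eq]
  simp only [IsHermitian.cfc, Unitary.conjStarAlgAut_apply, Matrix.trace_mul_cycle,
    Unitary.coe_star_mul_self, Matrix.one_mul, Matrix.trace_diagonal]
  refine Finset.sum_congr rfl fun i _ => ?_
  simp [Real.coe_sqrt, max_eq_left (hA.eigenvalues_nonneg i)]

end SqrtPort

lemma myTrace_sqrt_eq {n : Type*} [Fintype n] [DecidableEq n] {A : Matrix n n ℂ}
    (hA : A.PosSemidef) :
    hA.sqrt.trace = ∑ i, (Real.sqrt (hA.isHermitian.eigenvalues i) : ℂ) := by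
  exact hA.trace_sqrt

lemma mySchNorm_one {m n : Type*} [Fintype m] [Fintype n] [DecidableEq n] (a : Matrix m n ℂ) :
    schNorm 1 a = ∑ j, Real.sqrt (ctmEig a j) := by
  rw [schNorm, if_neg ENNReal.one_ne_top, ENNReal.toReal_one]
  rw [div_one, Real.rpow_one]
  exact Finset.sum_congr rfl fun j _ => (Real.sqrt_eq_rpow _).symm

lemma mySchNorm_one_nonneg {m n : Type*} [Fintype m] [Fintype n] [DecidableEq n]
    (a : Matrix m n ℂ) : 0 ≤ schNorm 1 a := by
  rw [mySchNorm_one]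
  exact Finset.sum_nonneg fun j _ => Real.sqrt_nonneg _

lemma mySchNorm_one_eq_of {m n : Type*} [Fintype m] [Fintype n] [DecidableEq n]
    (a : Matrix m n ℂ) {B : Matrix n n ℂ} (hB : B.PosSemidef)
    (h : aᴴ * a = B) : schNorm 1 a = hB.sqrt.trace.re := by
  subst h
  rw [mySchNorm_one, myTrace_sqrt_eq]
  rw [Complex.re_sum]
  exact Finset.sum_congr rfl fun j _ => (Complex.ofReal_re _).symm


section EmbMat
variable {P ν : Type*} [Fintype P] [DecidableEq P] [Fintype ν] [DecidableEq ν]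

/-- Coisometry selecting the `j`-th column block. -/
def Emat (P ν : Type*) [DecidableEq P] [DecidableEq ν] (j : ν) : Matrix P (P × ν) ℂ :=
  fun r q => if r = q.1 ∧ q.2 = j then 1 else 0

lemma Emat_mul_conjTranspose (j j' : ν) :
    Emat P ν j * (Emat P ν j')ᴴ = if j = j' then (1 : Matrix P P ℂ) else 0 := by
  ext r r'
  simp only [Matrix.mul_apply, Emat, Matrix.conjTranspose_apply, apply_ite (star : ℂ → ℂ),
    star_one, star_zero, ite_zero_mul_ite_zero, one_mul]
  have hcond : ∀ ql : P × ν,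
      ((r = ql.1 ∧ ql.2 = j) ∧ r' = ql.1 ∧ ql.2 = j') ↔ (ql = (r, j) ∧ (r = r' ∧ j = j')) := by
    rintro ⟨q, l⟩
    constructor
    · rintro ⟨⟨rfl, rfl⟩, rfl, rfl⟩; exact ⟨rfl, rfl, rfl⟩
    · rintro ⟨h, rfl, rfl⟩
      obtain ⟨h1, h2⟩ := Prod.mk.injEq .. ▸ h
      exact ⟨⟨h1.symm, h2⟩, h1.symm, h2⟩
  simp_rw [hcond, ite_and]
  rw [Finset.sum_ite_eq' Finset.univ ((r, j) : P × ν)]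
  by_cases h : j = j'
  · subst h
    by_cases hr : r = r' <;> simp [hr, Matrix.one_apply]
  · have : ¬(r = r' ∧ j = j') := fun hc => h hc.2
    simp [this, h]

end EmbMat

section Emb
variable {P ν : Type*} [Fintype P] [DecidableEq P] [Fintype ν] [DecidableEq ν]

/-- Embed a `P × P` matrix as a block of a `(P × ν) × (P × ν)` matrix at block `(j, j)`. -/
noncomputable def emb (j : ν) (A : Matrix P P ℂ) : Matrix (P × ν) (P × ν) ℂ :=
  (Emat P ν j)ᴴ * A * Emat P ν j

lemma Emat_mul_conjTranspose_self (j : ν) : Emat P ν j * (Emat P ν j)ᴴ = 1 := by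
  rw [Emat_mul_conjTranspose, if_pos rfl]

lemma emb_mul (j : ν) (A B : Matrix P P ℂ) : emb j A * emb j B = emb j (A * B) := by
  unfold emb
  simp only [Matrix.mul_assoc]
  rw [← Matrix.mul_assoc (Emat P ν j) (Emat P ν j)ᴴ, Emat_mul_conjTranspose_self,
    Matrix.one_mul]

lemma emb_trace (j : ν) (A : Matrix P P ℂ) : (emb j A).trace = A.trace := by
  unfold emb
  rw [Matrix.trace_mul_cycle, Emat_mul_conjTranspose_self, Matrix.one_mul]

lemma emb_posSemidef (j : ν) {A : Matrix P P ℂ} (hA : A.PosSemidef) :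
    (emb j A).PosSemidef :=
  hA.conjTranspose_mul_mul_same (Emat P ν j)

lemma emb_sqrt (j : ν) {A : Matrix P P ℂ} (hA : A.PosSemidef) :
    (emb_posSemidef j hA).sqrt = emb j hA.sqrt :=
  ((emb_posSemidef j hA.posSemidef_sqrt).eq_sqrt_of_sq_eq (emb_posSemidef j hA)
    (by rw [pow_two, emb_mul, ← pow_two, hA.sq_sqrt])).symm

end Emb

section Sub
variable {α : Type*} [Fintype α] [DecidableEq α] {K : ℕ}

lemma psd_submatrix {A : Matrix α α ℂ} (hA : A.PosSemidef) (e : Fin K ≃ α) :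
    (A.submatrix e e).PosSemidef := by
  constructor
  · rw [Matrix.IsHermitian, Matrix.conjTranspose_submatrix, hA.1]
  · exact (hA.submatrix e).2

lemma sqrt_submatrix {A : Matrix α α ℂ} (hA : A.PosSemidef) (e : Fin K ≃ α) :
    (psd_submatrix hA e).sqrt = hA.sqrt.submatrix e e :=
  ((psd_submatrix hA.posSemidef_sqrt e).eq_sqrt_of_sq_eq (psd_submatrix hA e)
    (by rw [pow_two, Matrix.submatrix_mul_equiv, ← pow_two, hA.sq_sqrt])).symm

lemma trace_submatrix_equiv' (A : Matrix α α ℂ) (e : Fin K ≃ α) :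
    (A.submatrix e e).trace = A.trace := by
  simp only [Matrix.trace, Matrix.diag, Matrix.submatrix_apply]
  exact Fintype.sum_equiv e _ _ (fun i => rfl)

end Sub

section Core
variable {P ν : Type*} [Fintype P] [DecidableEq P] [Fintype ν] [DecidableEq ν]

/-- Block embedding as column `(k, j0)` block. -/
noncomputable def Ymat (j0 k : ν) (a : Matrix P P ℂ) : Matrix (P × ν) (P × ν) ℂ :=
  (Emat P ν k)ᴴ * a * Emat P ν j0

lemma Ymat_conjTranspose_mul (j0 k k' : ν) (a b : Matrix P P ℂ) :
    (Ymat j0 k a)ᴴ * Ymat j0 k' b = if k = k' then emb j0 (aᴴ * b) else 0 := by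
  unfold Ymat emb
  simp only [Matrix.conjTranspose_mul, Matrix.conjTranspose_conjTranspose, Matrix.mul_assoc]
  rw [← Matrix.mul_assoc (Emat P ν k) (Emat P ν k')ᴴ, Emat_mul_conjTranspose]
  by_cases h : k = k' <;> simp [h, Matrix.mul_assoc]

lemma schNorm_psd {S : Matrix P P ℂ} (hS : S.PosSemidef) :
    schNorm 1 S = S.trace.re := by
  have hSS : (S * S).PosSemidef := by
    have := Matrix.posSemidef_conjTranspose_mul_self S
    rwa [hS.1] at this
  rw [mySchNorm_one_eq_of S hSS (by rw [hS.1]),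
    ← hS.eq_sqrt_of_sq_eq hSS (by rw [pow_two])]

lemma schNorm_Ymat (j0 k : ν) (a : Matrix P P ℂ) :
    schNorm 1 (Ymat j0 k a) = schNorm 1 a := by
  have h : (Ymat j0 k a)ᴴ * Ymat j0 k a = emb j0 (aᴴ * a) := by
    rw [Ymat_conjTranspose_mul, if_pos rfl]
  rw [mySchNorm_one_eq_of _ (emb_posSemidef j0 (Matrix.posSemidef_conjTranspose_mul_self a)) h,
    emb_sqrt j0 (Matrix.posSemidef_conjTranspose_mul_self a), emb_trace, ← mySchNorm_one_eq_of a (Matrix.posSemidef_conjTranspose_mul_self a) rfl]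

lemma schNorm_signed (j0 : ν) (x : ν → Matrix P P ℂ) (c : ν → ℂ)
    (hc : ∀ k, star (c k) * c k = 1) {S : Matrix P P ℂ} (hS : S.PosSemidef)
    (hsq : S * S = ∑ k, (x k)ᴴ * x k) :
    schNorm 1 (∑ k, c k • Ymat j0 k (x k)) = schNorm 1 S := by
  have hSS : (S * S).PosSemidef := by
    have := Matrix.posSemidef_conjTranspose_mul_self S
    rwa [hS.1] at this
  have hZ : (∑ k, c k • Ymat j0 k (x k))ᴴ * (∑ k, c k • Ymat j0 k (x k))
      = emb j0 (S * S) := by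
    rw [Matrix.conjTranspose_sum]
    simp only [Matrix.conjTranspose_smul]
    rw [Finset.sum_mul_sum]
    have hterm : ∀ k k' : ν, (star (c k) • (Ymat j0 k (x k))ᴴ) * (c k' • Ymat j0 k' (x k'))
        = if k = k' then emb j0 ((x k)ᴴ * x k) else 0 := by
      intro k k'
      rw [smul_mul_smul_comm, Ymat_conjTranspose_mul]
      by_cases h : k = k'
      · subst h
        have := hc k
        rw [RCLike.star_def] at this
        simp [this]
      · rw [if_neg h, if_neg h, smul_zero]
    simp only [hterm]
    rw [Finset.sum_congr rfl fun k _ => Finset.sum_ite_eq Finset.univ k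
      (fun k' => emb j0 ((x k)ᴴ * x k))]
    simp only [Finset.mem_univ, if_pos]
    unfold emb
    rw [hsq, Matrix.mul_sum, Matrix.sum_mul]
  rw [mySchNorm_one_eq_of _ (emb_posSemidef j0 hSS) hZ, emb_sqrt j0 hSS, emb_trace,
    ← hS.eq_sqrt_of_sq_eq hSS (by rw [pow_two]), schNorm_psd hS]

end Core

section SubNorm
variable {α : Type*} [Fintype α] [DecidableEq α] {K : ℕ}

lemma schNorm_submatrix (W : Matrix α α ℂ) (e : Fin K ≃ α) :
    schNorm 1 (W.submatrix e e) = schNorm 1 W := by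
  have h : (W.submatrix e e)ᴴ * (W.submatrix e e) = (Wᴴ * W).submatrix e e := by
    rw [Matrix.conjTranspose_submatrix, Matrix.submatrix_mul_equiv]
  rw [mySchNorm_one_eq_of _ (psd_submatrix (Matrix.posSemidef_conjTranspose_mul_self W) e) h,
    sqrt_submatrix (Matrix.posSemidef_conjTranspose_mul_self W) e, trace_submatrix_equiv',
    ← mySchNorm_one_eq_of W (Matrix.posSemidef_conjTranspose_mul_self W) rfl]

end SubNorm

/-- If the trace class (of any finite dimension, uniformly) has cotype 2 with constant `c`,
then for any finite family `x₁,…,x_n` in `S_1(S_1)` (trace class valued in trace class,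
modelled on `ℓ_2(ℕ²)` and here on a product index) one has the square-function estimate
`(∑ ‖x_k‖_{S_1(S_1)}^2)^{1/2} ≤ c ‖(∑ x_k^* x_k)^{1/2}‖_{S_1(S_1)}`. -/
theorem stmt_6 (c : ℝ)
    (hcot : ∀ (K n : ℕ) (y : Fin n → Matrix (Fin K) (Fin K) ℂ),
      (∑ k, schNorm 1 (y k) ^ 2) ^ (1/2 : ℝ)
        ≤ c * ((∑ ε : Fin n → Bool,
            schNorm 1 (∑ k, (if ε k then (1 : ℂ) else -1) • y k)) / 2 ^ n))
    (N M n : ℕ) (x : Fin n → Matrix (Fin N × Fin M) (Fin N × Fin M) ℂ)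
    (s : Matrix (Fin N × Fin M) (Fin N × Fin M) ℂ) (hs : s.PosSemidef)
    (hsq : s * s = ∑ k, (x k)ᴴ * x k) :
    (∑ k, schNorm 1 (x k) ^ 2) ^ (1/2 : ℝ) ≤ c * schNorm 1 s := by
  by_cases hn : n = 0
  · -- degenerate case: empty family; need `0 ≤ c * schNorm 1 s`.
    have hone : schNorm 1 (1 : Matrix (Fin 1) (Fin 1) ℂ) = 1 := by
      rw [schNorm_psd Matrix.PosSemidef.one, Matrix.trace_one]
      simp
    have hneg : schNorm 1 (-1 : Matrix (Fin 1) (Fin 1) ℂ) = 1 := by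
      have h : (-1 : Matrix (Fin 1) (Fin 1) ℂ)ᴴ * (-1) = 1 := by simp
      rw [mySchNorm_one_eq_of _ Matrix.PosSemidef.one h,
        ← Matrix.PosSemidef.one.eq_sqrt_of_sq_eq Matrix.PosSemidef.one (one_pow 2),
        Matrix.trace_one]
      simp
    have hc0 : 0 ≤ c := by
      have h := hcot 1 1 (fun _ => (1 : Matrix (Fin 1) (Fin 1) ℂ))
      have hsum : ∀ ε : Fin 1 → Bool,
          schNorm 1 (∑ k : Fin 1, (if ε k then (1:ℂ) else -1)
              • (1 : Matrix (Fin 1) (Fin 1) ℂ)) = 1 := by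
        intro ε
        rw [Fin.sum_univ_one]
        by_cases hb : ε 0 <;> simp [hb, hone, hneg]
      rw [Finset.sum_congr rfl fun ε _ => hsum ε] at h
      simp only [Fin.sum_univ_one, hone, Finset.sum_const, Finset.card_univ] at h
      norm_num [Real.one_rpow] at h
      linarith
    subst hn
    rw [show (Finset.univ : Finset (Fin 0)) = ∅ from rfl, Finset.sum_empty,
      Real.zero_rpow (by norm_num)]
    exact mul_nonneg hc0 (mySchNorm_one_nonneg s)
  · have hn' : 0 < n := Nat.pos_of_ne_zero hn
    set k0 : Fin n := ⟨0, hn'⟩ with hk0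
    set K : ℕ := Fintype.card ((Fin N × Fin M) × Fin n) with hK
    set e : Fin K ≃ ((Fin N × Fin M) × Fin n) := (Fintype.equivFin _).symm with he
    set y : Fin n → Matrix (Fin K) (Fin K) ℂ :=
      fun k => (Ymat k0 k (x k)).submatrix e e with hy
    have hyx : ∀ k, schNorm 1 (y k) = schNorm 1 (x k) := fun k => by
      rw [hy]
      rw [schNorm_submatrix, schNorm_Ymat]
    have hε : ∀ ε : Fin n → Bool,
        schNorm 1 (∑ k, (if ε k then (1:ℂ) else -1) • y k) = schNorm 1 s := by
      intro ε
      have hsub : (∑ k, (if ε k then (1:ℂ) else -1) • y k)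
          = (∑ k, (if ε k then (1:ℂ) else -1) • Ymat k0 k (x k)).submatrix e e := by
        ext i j
        simp only [hy, Matrix.submatrix_apply, Matrix.sum_apply]
        refine Finset.sum_congr rfl fun k _ => ?_
        by_cases hb : ε k <;> simp [hb]
      rw [hsub, schNorm_submatrix,
        schNorm_signed k0 x _ (fun k => by by_cases hb : ε k <;> simp [hb]) hs hsq]
    calc (∑ k, schNorm 1 (x k) ^ 2) ^ (1/2 : ℝ)
        = (∑ k, schNorm 1 (y k) ^ 2) ^ (1/2 : ℝ) := by
          rw [show (∑ k, schNorm 1 (x k) ^ 2) = ∑ k, schNorm 1 (y k) ^ 2 from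
            Finset.sum_congr rfl fun k _ => by rw [hyx k]]
      _ ≤ c * ((∑ ε : Fin n → Bool,
            schNorm 1 (∑ k, (if ε k then (1 : ℂ) else -1) • y k)) / 2 ^ n) := hcot K n y
      _ = c * schNorm 1 s := by
          rw [Finset.sum_congr rfl fun ε _ => hε ε, Finset.sum_const, Finset.card_univ]
          have hcard : Fintype.card (Fin n → Bool) = 2 ^ n := by
            simp [Fintype.card_fun]
          rw [hcard, nsmul_eq_mul]
          push_cast
          rw [mul_div_cancel_left₀ _ (by positivity : ((2:ℝ))^n ≠ 0)]
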